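/- Let f : Δ_{n-1} → ℝ with L-Lipschitz gradient, x* a stationary point, I^c = {i : λ_i(x*) > 0} ≠ ∅, δ_min = min_{i∈I^c} λ_i(x*), r* = δ_min/(δ_min + 2L). Suppose x_k ∈ Δ_{n-1} with ‖x_k − x*‖₁ < r*, J_k = {i ∈ I^c : (x_k)_i > 0} ≠ ∅, and δ_k = max_{i ∈ I∪J_k} λ_i(x*) where I = {i : λ_i(x*)=0}. Then: (i) λ_ĵ(x_k) > δ_k/2 for every ĵ ∈ argmax{λ_j(x*) : j ∈ J_k}; (ii) |λ_j(x_k)| < δ_k/2 for every j ∈ I; (iii) λ_j(x_k) > −δ_k/2 for every j ∈ I^c. Consequently max_{j ∈ S_k} λ_j(x_k) > max_j(−λ_j(x_k)) and the maximizer over S_k lies in J_k, so AFW performs an away step on a coordinate in J_k. -/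
import Mathlib


open RealInnerProductSpace

def probSimplex (n : ℕ) : Set (EuclideanSpace ℝ (Fin n)) :=
  {x | (∀ i, 0 ≤ x i) ∧ ∑ i, x i = 1}

noncomputable def stdVec {n : ℕ} (i : Fin n) : EuclideanSpace ℝ (Fin n) :=
  EuclideanSpace.single i 1

noncomputable def mult {n : ℕ} (G : EuclideanSpace ℝ (Fin n) → EuclideanSpace ℝ (Fin n))
    (x : EuclideanSpace ℝ (Fin n)) (i : Fin n) : ℝ :=
  ⟪G x, stdVec i - x⟫

lemma mult_eq {n : ℕ} (G : EuclideanSpace ℝ (Fin n) → EuclideanSpace ℝ (Fin n))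
    (x : EuclideanSpace ℝ (Fin n)) (i : Fin n) :
    mult G x i = G x i - ∑ j, G x j * x j := by
  simp [mult, stdVec, inner_sub_right, PiLp.inner_apply, RCLike.inner_apply,
    EuclideanSpace.single_apply, Finset.mul_sum, mul_comm]

lemma stdVec_mem {n : ℕ} (i : Fin n) : stdVec i ∈ probSimplex n := by
  constructor
  · intro j
    simp [stdVec, EuclideanSpace.single_apply]
    split <;> norm_num
  · simp [stdVec, EuclideanSpace.single_apply]

/-- Local identification: if `‖x_k − x*‖₁ < r* = δ_min/(δ_min + 2L)` and
`J_k = {i ∈ I^c : (x_k)_i > 0} ≠ ∅`, with `δ_k = max_{i ∈ I ∪ J_k} λ_i(x*)`, then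
(i) `λ_jhat(x_k) > δ_k/2` for maximizers `jhat` of `λ_·(x*)` over `J_k`;
(ii) `|λ_j(x_k)| < δ_k/2` for `j ∈ I`;
(iii) `λ_j(x_k) > −δ_k/2` for `j ∈ I^c`;
and consequently the AFW performs an away step on a coordinate in `J_k`:
there is `jhat ∈ J_k` maximizing `λ_·(x_k)` over the support of `x_k` with
`λ_jhat(x_k) > max_j(−λ_j(x_k))`. -/
theorem afw_local_identification {n : ℕ}
    (f : EuclideanSpace ℝ (Fin n) → ℝ)
    (G : EuclideanSpace ℝ (Fin n) → EuclideanSpace ℝ (Fin n))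
    (hG : ∀ x, HasGradientAt f (G x) x) (L : ℝ) (hLpos : 0 < L)
    (hL : ∀ x y, (∑ i, |G x i - G y i|) ≤ L * ∑ i, |x i - y i|)
    (xs : EuclideanSpace ℝ (Fin n)) (hxs : xs ∈ probSimplex n)
    (hstat : ∀ y ∈ probSimplex n, 0 ≤ ⟪G xs, y - xs⟫)
    (hIc : ∃ i, 0 < mult G xs i)
    (δmin : ℝ) (hδmin : IsLeast {v | ∃ i, 0 < mult G xs i ∧ v = mult G xs i} δmin)
    (xk : EuclideanSpace ℝ (Fin n)) (hxk : xk ∈ probSimplex n)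
    (hdist : (∑ i, |xk i - xs i|) < δmin / (δmin + 2 * L))
    (hJ : ∃ i, 0 < mult G xs i ∧ 0 < xk i)
    (δk : ℝ)
    (hδk : IsGreatest
      {v | ∃ i, (mult G xs i = 0 ∨ (0 < mult G xs i ∧ 0 < xk i)) ∧ v = mult G xs i} δk) :
    (∀ jhat, (0 < mult G xs jhat ∧ 0 < xk jhat) →
        (∀ j, 0 < mult G xs j ∧ 0 < xk j → mult G xs j ≤ mult G xs jhat) →
        δk / 2 < mult G xk jhat) ∧
    (∀ j, mult G xs j = 0 → |mult G xk j| < δk / 2) ∧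
    (∀ j, 0 < mult G xs j → -(δk / 2) < mult G xk j) ∧
    (∃ jhat, 0 < xk jhat ∧ 0 < mult G xs jhat ∧
        (∀ j, 0 < xk j → mult G xk j ≤ mult G xk jhat) ∧
        (∀ j, -mult G xk j < mult G xk jhat)) := by
  classical
  obtain ⟨hxs1, hxs2⟩ := hxs
  obtain ⟨hxk1, hxk2⟩ := hxk
  set d : ℝ := ∑ i, |xk i - xs i| with hd
  have hd0 : 0 ≤ d := Finset.sum_nonneg fun i _ => abs_nonneg _
  have hstat' : ∀ i, 0 ≤ mult G xs i := fun i => hstat (stdVec i) (stdVec_mem i)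
  have hδminpos : 0 < δmin := by
    obtain ⟨i, hi, he⟩ := hδmin.1
    exact he ▸ hi
  have hδmink : δmin ≤ δk := by
    obtain ⟨j, hj1, hj2⟩ := hJ
    have h1 : δmin ≤ mult G xs j := hδmin.2 ⟨j, hj1, rfl⟩
    have h2 : mult G xs j ≤ δk := hδk.2 ⟨j, Or.inr ⟨hj1, hj2⟩, rfl⟩
    linarith
  have hδkpos : 0 < δk := lt_of_lt_of_le hδminpos hδmink
  -- bound on λs over J_k
  have hδkub : ∀ j, 0 < xk j → mult G xs j ≤ δk := by
    intro j hj
    rcases (hstat' j).lt_or_eq with h | h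
    · exact hδk.2 ⟨j, Or.inr ⟨h, hj⟩, rfl⟩
    · exact h ▸ le_of_lt hδkpos
  -- complementarity
  have hcomp : ∀ j, xs j * mult G xs j = 0 := by
    have hsum : ∑ j, xs j * mult G xs j = 0 := by
      have h1 : ∑ j, xs j * mult G xs j
          = ∑ j, xs j * G xs j - (∑ j, G xs j * xs j) * ∑ j, xs j := by
        rw [Finset.mul_sum, ← Finset.sum_sub_distrib]
        refine Finset.sum_congr rfl fun j _ => by rw [mult_eq]; ring
      rw [h1, hxs2, mul_one]
      have : ∑ j, xs j * G xs j = ∑ j, G xs j * xs j :=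
        Finset.sum_congr rfl fun j _ => mul_comm _ _
      rw [this, sub_self]
    intro j
    exact (Finset.sum_eq_zero_iff_of_nonneg (fun i _ =>
      mul_nonneg (hxs1 i) (hstat' i))).1 hsum j (Finset.mem_univ j)
  have hxs_zero : ∀ j, 0 < mult G xs j → xs j = 0 := by
    intro j hj
    by_contra h
    have hx : 0 < xs j := lt_of_le_of_ne (hxs1 j) (Ne.symm h)
    nlinarith [hcomp j]
  -- KEY error bound
  have hkey : ∀ i, |mult G xk i - mult G xs i| < δk / 2 := by
    intro i
    have hxkle1 : ∀ j, xk j ≤ 1 := by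
      intro j
      rw [← hxk2]
      exact Finset.single_le_sum (fun i _ => hxk1 i) (Finset.mem_univ j)
    set A : ℝ := ∑ j, (G xk j - G xs j) * ((if j = i then (1:ℝ) else 0) - xk j) with hA
    set B : ℝ := ∑ j, mult G xs j * (xk j - xs j) with hB
    have hzero : ∑ j, (xk j - xs j) = 0 := by
      rw [Finset.sum_sub_distrib, hxk2, hxs2, sub_self]
    have hdecomp : mult G xk i - mult G xs i = A - B := by
      rw [mult_eq, mult_eq, hA, hB]
      have e1 : ∑ j, (G xk j - G xs j) * ((if j = i then (1:ℝ) else 0) - xk j)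
          = (G xk i - G xs i) - ∑ j, (G xk j - G xs j) * xk j := by
        simp only [mul_sub, Finset.sum_sub_distrib, mul_ite, mul_one, mul_zero,
          Finset.sum_ite_eq', Finset.mem_univ, if_true]
      have e2 : ∑ j, mult G xs j * (xk j - xs j)
          = ∑ j, G xs j * (xk j - xs j) - (∑ j, G xs j * xs j) * ∑ j, (xk j - xs j) := by
        rw [Finset.mul_sum, ← Finset.sum_sub_distrib]
        refine Finset.sum_congr rfl fun j _ => by rw [mult_eq]; ring
      rw [e1, e2, hzero, mul_zero, sub_zero]
      have e3 : ∑ j, G xk j * xk j - ∑ j, G xs j * xs j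
          = ∑ j, (G xk j - G xs j) * xk j + ∑ j, G xs j * (xk j - xs j) := by
        rw [← Finset.sum_add_distrib, ← Finset.sum_sub_distrib]
        exact Finset.sum_congr rfl fun j _ => by ring
      linarith
    have hAbound : |A| ≤ L * d := by
      calc |A| ≤ ∑ j, |(G xk j - G xs j) * ((if j = i then (1:ℝ) else 0) - xk j)| :=
            Finset.abs_sum_le_sum_abs _ _
        _ ≤ ∑ j, |G xk j - G xs j| := by
            refine Finset.sum_le_sum fun j _ => ?_
            rw [abs_mul]
            refine mul_le_of_le_one_right (abs_nonneg _) ?_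
            rw [abs_le]
            constructor <;> split <;> linarith [hxk1 j, hxkle1 j]
        _ ≤ L * d := hL xk xs
    have hB0 : 0 ≤ B := by
      refine Finset.sum_nonneg fun j _ => ?_
      rcases (hstat' j).lt_or_eq with h | h
      · rw [hxs_zero j h, sub_zero]
        exact mul_nonneg (le_of_lt h) (hxk1 j)
      · rw [← h, zero_mul]
    have hBub : B ≤ δk * (d / 2) := by
      have hmax : ∑ j, max (xk j - xs j) 0 = d / 2 := by
        have : ∀ j, max (xk j - xs j) 0 = ((xk j - xs j) + |xk j - xs j|) / 2 := by
          intro j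
          rcases le_or_gt 0 (xk j - xs j) with h | h
          · rw [max_eq_left h, abs_of_nonneg h]; ring
          · rw [max_eq_right (le_of_lt h), abs_of_neg h]; ring
        simp only [this]
        rw [← Finset.sum_div, Finset.sum_add_distrib, hzero, zero_add, hd]
      have step : ∀ j, mult G xs j * (xk j - xs j) ≤ δk * max (xk j - xs j) 0 := by
        intro j
        rcases (hstat' j).lt_or_eq with h | h
        · rw [hxs_zero j h, sub_zero]
          rcases (hxk1 j).lt_or_eq with hx | hx
          · rw [max_eq_left (le_of_lt hx)]
            exact mul_le_mul_of_nonneg_right (hδkub j hx) (le_of_lt hx)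
          · rw [← hx, mul_zero, max_self, mul_zero]
        · rw [← h, zero_mul]
          exact mul_nonneg (le_of_lt hδkpos) (le_max_right _ _)
      calc B ≤ ∑ j, δk * max (xk j - xs j) 0 := Finset.sum_le_sum fun j _ => step j
        _ = δk * (d / 2) := by rw [← Finset.mul_sum, hmax]
    have habs : |mult G xk i - mult G xs i| ≤ (L + δk / 2) * d := by
      rw [hdecomp]
      have : |A - B| ≤ |A| + |B| := abs_sub _ _
      rw [abs_of_nonneg hB0] at this
      nlinarith
    have hstep : (L + δk / 2) * d < (L + δk / 2) * (δmin / (δmin + 2 * L)) := by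
      refine mul_lt_mul_of_pos_left hdist ?_
      linarith
    have hfin : (L + δk / 2) * (δmin / (δmin + 2 * L)) ≤ δk / 2 := by
      rw [mul_div_assoc', div_le_iff₀ (by linarith)]
      nlinarith
    linarith
  -- part (i)
  have part1 : ∀ jhat, (0 < mult G xs jhat ∧ 0 < xk jhat) →
      (∀ j, 0 < mult G xs j ∧ 0 < xk j → mult G xs j ≤ mult G xs jhat) →
      δk / 2 < mult G xk jhat := by
    intro jhat ⟨h1, h2⟩ hmax
    have hub : mult G xs jhat ≤ δk := hδk.2 ⟨jhat, Or.inr ⟨h1, h2⟩, rfl⟩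
    have hlb : δk ≤ mult G xs jhat := by
      obtain ⟨i0, hi0, he⟩ := hδk.1
      rcases hi0 with h | h
      · exfalso; rw [he, h] at hδkpos; exact lt_irrefl 0 hδkpos
      · rw [he]; exact hmax i0 h
    have heq : mult G xs jhat = δk := le_antisymm hub hlb
    have := hkey jhat
    rw [abs_lt] at this
    linarith [this.1]
  have part2 : ∀ j, mult G xs j = 0 → |mult G xk j| < δk / 2 := by
    intro j hj
    have := hkey j
    rw [hj, sub_zero] at this
    exact this
  have part3 : ∀ j, 0 < mult G xs j → -(δk / 2) < mult G xk j := by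
    intro j hj
    have := hkey j
    rw [abs_lt] at this
    linarith [this.1]
  refine ⟨part1, part2, part3, ?_⟩
  -- part (iv)
  obtain ⟨j0, hj01, hj02⟩ := hJ
  -- maximizer of λs over J_k
  set J : Finset (Fin n) := Finset.univ.filter (fun j => 0 < mult G xs j ∧ 0 < xk j) with hJdef
  have hJne : J.Nonempty := ⟨j0, by simp [hJdef, hj01, hj02]⟩
  obtain ⟨j1, hj1J, hj1max⟩ := J.exists_max_image (fun j => mult G xs j) hJne
  simp only [hJdef, Finset.mem_filter, Finset.mem_univ, true_and] at hj1J
  have hj1big : δk / 2 < mult G xk j1 := by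
    refine part1 j1 hj1J fun j hj => ?_
    exact hj1max j (by simp [hJdef, hj.1, hj.2])
  -- maximizer of λk over support
  set S : Finset (Fin n) := Finset.univ.filter (fun j => 0 < xk j) with hSdef
  have hSne : S.Nonempty := ⟨j0, by simp [hSdef, hj02]⟩
  obtain ⟨jh, hjhS, hjhmax⟩ := S.exists_max_image (fun j => mult G xk j) hSne
  simp only [hSdef, Finset.mem_filter, Finset.mem_univ, true_and] at hjhS
  have hjhbig : δk / 2 < mult G xk jh := by
    have := hjhmax j1 (by simp [hSdef, hj1J.2])
    exact lt_of_lt_of_le hj1big this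
  have hjhpos : 0 < mult G xs jh := by
    rcases (hstat' jh).lt_or_eq with h | h
    · exact h
    · exfalso
      have := part2 jh h.symm
      have h2 : mult G xk jh ≤ |mult G xk jh| := le_abs_self _
      linarith
  refine ⟨jh, hjhS, hjhpos, fun j hj => hjhmax j (by simp [hSdef, hj]), fun j => ?_⟩
  rcases (hstat' j).lt_or_eq with h | h
  · have := part3 j h
    linarith
  · have := part2 j h.symm
    have h2 : -mult G xk j ≤ |mult G xk j| := neg_le_abs _
    linarith
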